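/- Let k be an odd natural number and N a natural number with k ≤ N. Then the maximum of λ_{N,k}(m) over m ∈ {0,1,...,N} equals C(N,k) (attained at m = N), and the minimum equals −C(N,k) (attained at m = 0), where λ_{N,k}(m) := ∑_{i=0}^{k} (−1)^i · C(N−m,i) · C(m,k−i). -/
import Mathlib


/-- The eigenvalue `λ_{N,k}(m)` of the `k`-body Ising Hamiltonian on a basis state
with `m` spins up. -/
def isingEigenvalue (N k m : ℕ) : ℤ :=
  ∑ i ∈ Finset.range (k + 1), (-1 : ℤ) ^ i * ((N - m).choose i) * (m.choose (k - i))

lemma vandermonde_range (a b k : ℕ) :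
    ∑ i ∈ Finset.range (k + 1), a.choose i * b.choose (k - i) = (a + b).choose k := by
  rw [Nat.add_choose_eq, Finset.Nat.sum_antidiagonal_eq_sum_range_succ_mk]

lemma ising_abs_le (N k m : ℕ) (hm : m ≤ N) :
    |isingEigenvalue N k m| ≤ (N.choose k : ℤ) := by
  unfold isingEigenvalue
  calc |∑ i ∈ Finset.range (k + 1),
        (-1 : ℤ) ^ i * ((N - m).choose i) * (m.choose (k - i))|
      ≤ ∑ i ∈ Finset.range (k + 1),
        |(-1 : ℤ) ^ i * ((N - m).choose i) * (m.choose (k - i))| :=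
        Finset.abs_sum_le_sum_abs _ _
    _ = ∑ i ∈ Finset.range (k + 1),
        (((N - m).choose i : ℤ) * (m.choose (k - i))) := by
        refine Finset.sum_congr rfl fun i _ => ?_
        rw [abs_mul, abs_mul, abs_pow, abs_neg, abs_one, one_pow, one_mul,
          Nat.abs_cast, Nat.abs_cast]
    _ = (N.choose k : ℤ) := by
        have := vandermonde_range (N - m) m k
        rw [Nat.sub_add_cancel hm] at this
        rw [← this]
        push_cast
        rfl

lemma ising_at_N (N k : ℕ) : isingEigenvalue N k N = (N.choose k : ℤ) := by
  unfold isingEigenvalue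
  rw [Finset.sum_eq_single 0]
  · simp
  · intro i _ hi
    simp [Nat.sub_self, Nat.choose_eq_zero_of_lt (Nat.pos_of_ne_zero hi)]
  · simp

lemma ising_at_0 (N k : ℕ) (hk : Odd k) :
    isingEigenvalue N k 0 = -(N.choose k : ℤ) := by
  unfold isingEigenvalue
  rw [Finset.sum_eq_single k]
  · simp [hk.neg_one_pow]
  · intro i hi hik
    have : i < k := lt_of_le_of_ne (Nat.lt_succ_iff.mp (Finset.mem_range.mp hi)) hik
    simp [Nat.choose_eq_zero_of_lt (Nat.sub_pos_of_lt this)]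
  · simp

/-- For odd `k ≤ N`, the maximum of `λ_{N,k}(m)` over `m ∈ {0,…,N}` is `C(N,k)`,
attained at `m = N`, and the minimum is `-C(N,k)`, attained at `m = 0`. -/
theorem isingEigenvalue_odd_max_min (N k : ℕ) (hk : Odd k) (hkN : k ≤ N) :
    IsGreatest ((fun m => isingEigenvalue N k m) '' Set.Iic N) (N.choose k : ℤ) ∧
    IsLeast ((fun m => isingEigenvalue N k m) '' Set.Iic N) (-(N.choose k : ℤ)) ∧
    isingEigenvalue N k N = (N.choose k : ℤ) ∧
    isingEigenvalue N k 0 = -(N.choose k : ℤ) := by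
  refine ⟨⟨⟨N, le_refl N, ising_at_N N k⟩, ?_⟩,
    ⟨⟨0, Nat.zero_le N, ising_at_0 N k hk⟩, ?_⟩, ising_at_N N k, ising_at_0 N k hk⟩
  · rintro x ⟨m, hm, rfl⟩
    exact le_of_abs_le (ising_abs_le N k m hm)
  · rintro x ⟨m, hm, rfl⟩
    exact neg_le_of_abs_le (ising_abs_le N k m hm)
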